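/- Let V ⊆ A₀ be compact with V^T complete. Then V^T = ∪_{0<r<1} P_r(V^T) = ∪_{0<r<1} P_r([P_r(V)]^T). -/

import Mathlib

open Metric Set Filter
open scoped UniformConvergence

noncomputable def coeff (f : ℂ → ℂ) (k : ℕ) : ℂ := iteratedDeriv k f 0 / (k.factorial : ℂ)

noncomputable def hadamard (f g : ℂ → ℂ) : ℂ → ℂ := fun z => ∑' k : ℕ, coeff f k * coeff g k * z ^ k

def Pt (x : ℂ) (f : ℂ → ℂ) : ℂ → ℂ := fun z => f (x * z)

def A0 : Set (ℂ → ℂ) := {f | AnalyticOnNhd ℂ f (ball (0:ℂ) 1) ∧ f 0 = 1}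

def cm (V : Set (ℂ → ℂ)) : Set (ℂ → ℂ) := {h | ∃ f ∈ V, ∃ x : ℂ, ‖x‖ ≤ 1 ∧ h = Pt x f}

def dual (V : Set (ℂ → ℂ)) : Set (ℂ → ℂ) :=
  {g ∈ A0 | ∀ f ∈ V, ∀ z ∈ ball (0:ℂ) 1, hadamard f g z ≠ 0}

def eligible (g : ℂ → ℂ) : Prop := ∃ R > 1, AnalyticOnNhd ℂ g (ball (0:ℂ) R)

def VT (V : Set (ℂ → ℂ)) : Set (ℂ → ℂ) :=
  {g | eligible g ∧ g 0 = 1 ∧ ∀ f ∈ V, hadamard f g 1 ≠ 0}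

def perp (U : Set (ℂ → ℂ)) : Set (ℂ → ℂ) :=
  {h ∈ A0 | ∀ g ∈ U, hadamard g h 1 ≠ 0}

def lamSet (g : ℂ → ℂ) (V : Set (ℂ → ℂ)) : Set ℂ := (fun f => hadamard f g 1) '' V

def S (R : ℝ) : Set (Set ℂ) := {K | K ⊆ ball (0:ℂ) R ∧ IsCompact K}

noncomputable def closLU (R : ℝ) (U : Set (ℂ → ℂ)) : Set (ℂ → ℂ) :=
  (UniformOnFun.toFun (S R)) '' closure ((UniformOnFun.ofFun (S R)) '' U)

lemma coeff_eq_ps {f : ℂ → ℂ} {p : FormalMultilinearSeries ℂ ℂ ℂ} {r : ENNReal}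
    (h : HasFPowerSeriesOnBall f p 0 r) (k : ℕ) : coeff f k = p.coeff k := by
  have h1 := h.factorial_smul (y := (1:ℂ)) k
  rw [coeff, iteratedDeriv_eq_iteratedFDeriv, ← h1, nsmul_eq_mul]
  rw [mul_div_cancel_left₀]
  · rfl
  · exact_mod_cast Nat.cast_ne_zero.mpr k.factorial_ne_zero

lemma coeff_bound {f : ℂ → ℂ} {ρ A : ℝ} (hρ : 0 < ρ)
    (hd : DifferentiableOn ℂ f (closedBall (0:ℂ) ρ))
    (hA : ∀ z ∈ closedBall (0:ℂ) ρ, ‖f z‖ ≤ A) (k : ℕ) :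
    ‖coeff f k‖ ≤ A / ρ ^ k := by
  lift ρ to NNReal using hρ.le with ρ' hρ'
  have hρ0 : (0:ℝ) < ρ' := hρ
  have h := hd.hasFPowerSeriesOnBall (c := 0) hρ0
  rw [coeff_eq_ps h k]
  have h2 : ‖(cauchyPowerSeries f 0 ρ').coeff k‖ = ‖cauchyPowerSeries f 0 ρ' k‖ :=
    (FormalMultilinearSeries.norm_apply_eq_norm_coef).symm
  have h3 := norm_cauchyPowerSeries_le f 0 ρ' k
  have hcont : Continuous fun θ : ℝ => ‖f (circleMap 0 ρ' θ)‖ := by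
    refine (hd.continuousOn.comp_continuous (continuous_circleMap 0 ρ') ?_).norm
    intro θ
    simpa using circleMap_mem_closedBall (0:ℂ) hρ0.le θ
  have hI : (∫ θ : ℝ in (0)..2 * Real.pi, ‖f (circleMap 0 ρ' θ)‖) ≤ (2 * Real.pi) * A := by
    have := intervalIntegral.integral_mono_on (a := 0) (b := 2 * Real.pi)
      (f := fun θ : ℝ => ‖f (circleMap 0 ρ' θ)‖) (g := fun _ => A)
      Real.two_pi_pos.le (hcont.intervalIntegrable (μ := MeasureTheory.volume) _ _) intervalIntegrable_const
      (fun θ _ => hA _ (by simpa using circleMap_mem_closedBall (0:ℂ) hρ0.le θ))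
    simpa [mul_comm] using this
  have hpos : (0:ℝ) < 2 * Real.pi := Real.two_pi_pos
  have h4 : ((2 * Real.pi)⁻¹ * ∫ θ : ℝ in (0)..2 * Real.pi, ‖f (circleMap 0 ρ' θ)‖) ≤ A := by
    rw [inv_mul_le_iff₀ hpos]
    linarith
  rw [h2]
  calc ‖cauchyPowerSeries f 0 ρ' k‖
      ≤ ((2 * Real.pi)⁻¹ * ∫ θ : ℝ in (0)..2 * Real.pi, ‖f (circleMap 0 ρ' θ)‖) * |(ρ':ℝ)|⁻¹ ^ k := h3
    _ ≤ A * |(ρ':ℝ)|⁻¹ ^ k := by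
        apply mul_le_mul_of_nonneg_right h4
        positivity
    _ = A / ρ' ^ k := by
        rw [abs_of_pos hρ0, inv_pow, div_eq_mul_inv]


lemma coeff_sub {f g : ℂ → ℂ} (hf : AnalyticOnNhd ℂ f (ball (0:ℂ) 1))
    (hg : AnalyticOnNhd ℂ g (ball (0:ℂ) 1)) (k : ℕ) :
    coeff (fun z => f z - g z) k = coeff f k - coeff g k := by
  have hop : IsOpen (ball (0:ℂ) 1) := isOpen_ball
  have hu : UniqueDiffOn ℂ (ball (0:ℂ) 1) := hop.uniqueDiffOn
  have h0 : (0:ℂ) ∈ ball (0:ℂ) 1 := mem_ball_self one_pos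
  have hfc : ContDiffOn ℂ (k:ℕ∞) f (ball (0:ℂ) 1) := hf.differentiableOn.contDiffOn hop
  have hgc : ContDiffOn ℂ (k:ℕ∞) g (ball (0:ℂ) 1) := hg.differentiableOn.contDiffOn hop
  have key : ∀ h : ℂ → ℂ, iteratedDeriv k h 0 = iteratedDerivWithin k h (ball (0:ℂ) 1) 0 := by
    intro h
    rw [iteratedDeriv_eq_iteratedFDeriv, iteratedDerivWithin_eq_iteratedFDerivWithin,
      iteratedFDerivWithin_of_isOpen k hop h0]
  unfold coeff
  rw [key, key f, key g, show (fun z => f z - g z) = f - g from rfl,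
    iteratedDerivWithin_sub h0 hu ((hfc 0 h0).of_le (by norm_cast)) ((hgc 0 h0).of_le (by norm_cast))]
  ring

lemma coeff_Pt {f : ℂ → ℂ} {R : ℝ} (hR : 0 < R) (hf : AnalyticOnNhd ℂ f (ball (0:ℂ) R))
    (x : ℂ) (k : ℕ) : coeff (Pt x f) k = x ^ k * coeff f k := by
  have hop : IsOpen {z : ℂ | x * z ∈ ball (0:ℂ) R} :=
    isOpen_ball.preimage (continuous_const.mul continuous_id)
  have main : ∀ n : ℕ, ∀ z : ℂ, x * z ∈ ball (0:ℂ) R →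
      iteratedDeriv n (Pt x f) z = x ^ n * iteratedDeriv n f (x * z) := by
    intro n
    induction n with
    | zero => intro z _; simp [iteratedDeriv_zero, Pt]
    | succ n IH =>
      intro z hz
      rw [iteratedDeriv_succ]
      have hloc : iteratedDeriv n (Pt x f) =ᶠ[nhds z]
          fun w => x ^ n * iteratedDeriv n f (x * w) :=
        eventually_of_mem (hop.mem_nhds hz) IH
      rw [hloc.deriv_eq]
      have hF : DifferentiableAt ℂ (iteratedDeriv n f) (x * z) := by
        have h1 := (hf.iterated_deriv n) (x * z) hz
        rw [iteratedDeriv_eq_iterate]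
        exact h1.differentiableAt
      have hinner : HasDerivAt (fun w : ℂ => x * w) x z := by
        simpa using (hasDerivAt_id z).const_mul x
      have h1 : HasDerivAt (fun w => iteratedDeriv n f (x * w))
          (deriv (iteratedDeriv n f) (x * z) * x) z :=
        (hF.hasDerivAt.comp z hinner)
      have h2 := (h1.const_mul (x ^ n)).deriv
      rw [h2, iteratedDeriv_succ]
      ring
  have h0 : x * 0 ∈ ball (0:ℂ) R := by simpa using hR
  unfold coeff
  rw [main k 0 h0, mul_zero]
  ring

lemma analyticOnNhd_Pt {g : ℂ → ℂ} {R R' : ℝ} (hg : AnalyticOnNhd ℂ g (ball (0:ℂ) R))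
    {x : ℂ} (h : ∀ z : ℂ, z ∈ ball (0:ℂ) R' → x * z ∈ ball (0:ℂ) R) :
    AnalyticOnNhd ℂ (Pt x g) (ball (0:ℂ) R') := by
  have hin : AnalyticOnNhd ℂ (fun z : ℂ => x * z) (ball (0:ℂ) R') :=
    analyticOnNhd_const.mul analyticOnNhd_id
  exact hg.comp hin h

lemma eligible_Pt {g : ℂ → ℂ} {R : ℝ} (hR : 1 < R) (hg : AnalyticOnNhd ℂ g (ball (0:ℂ) R))
    {x : ℂ} (hx : ‖x‖ < R) : eligible (Pt x g) := by
  set m : ℝ := max ‖x‖ 1 with hm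
  have hm1 : 1 ≤ m := le_max_right _ _
  have hm0 : 0 < m := lt_of_lt_of_le one_pos hm1
  have hmR : m < R := max_lt hx hR
  refine ⟨R / m, (one_lt_div hm0).mpr hmR, analyticOnNhd_Pt hg ?_⟩
  intro z hz
  simp only [mem_ball, dist_zero_right] at hz ⊢
  calc ‖x * z‖ = ‖x‖ * ‖z‖ := norm_mul _ _
    _ ≤ m * ‖z‖ := by apply mul_le_mul_of_nonneg_right (le_max_left _ _) (norm_nonneg _)
    _ < m * (R / m) := by exact mul_lt_mul_of_pos_left hz hm0
    _ = R := by field_simp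

lemma main_eps (V : Set (ℂ → ℂ)) (hV : V ⊆ A0)
    (hc : IsCompact ((UniformOnFun.ofFun (S 1)) '' V))
    {g : ℂ → ℂ} {R : ℝ} (hR : 1 < R) (hg : AnalyticOnNhd ℂ g (ball (0:ℂ) R))
    (hgV : ∀ f ∈ V, hadamard f g 1 ≠ 0) :
    ∃ ε : ℝ, 0 < ε ∧ 1 + ε < R ∧ ∀ f ∈ V, hadamard f g (((1 + ε : ℝ)):ℂ) ≠ 0 := by
  have hR0 : (0:ℝ) < R := lt_trans one_pos hR
  set s : ℝ := (1 + R) / 2 with hs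
  have hs1 : 1 < s := by rw [hs]; linarith
  have hsR : s < R := by rw [hs]; linarith
  have hs0 : 0 < s := by linarith
  set ρ : ℝ := (1 + s⁻¹) / 2 with hρ
  have hsinv1 : s⁻¹ < 1 := inv_lt_one_of_one_lt₀ hs1
  have hsinv0 : 0 < s⁻¹ := inv_pos.mpr hs0
  have hρ0 : 0 < ρ := by rw [hρ]; linarith
  have hρ1 : ρ < 1 := by rw [hρ]; linarith
  have hρs : 1 < ρ * s := by
    have : ρ * s = (s + 1) / 2 := by rw [hρ]; field_simp
    rw [this]; linarith
  set T : ℝ := (1 + ρ * s) / 2 with hT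
  have hT1 : 1 < T := by rw [hT]; linarith
  have hTρs : T < ρ * s := by rw [hT]; linarith
  have hρs0 : 0 < ρ * s := lt_trans one_pos hρs
  have hTR : T < R := by
    have h1 : ρ * s < s := by nlinarith
    linarith
  set q : ℝ := T / (ρ * s) with hq
  have hq0 : 0 < q := div_pos (by linarith) hρs0
  have hq1 : q < 1 := (div_lt_one hρs0).mpr hTρs
  have hCsum : Summable (fun k : ℕ => q ^ k) := summable_geometric_of_lt_one hq0.le hq1
  set C : ℝ := ∑' k : ℕ, q ^ k with hC
  have hC0 : 0 ≤ C := tsum_nonneg (fun k => by positivity)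
  -- bound on g's coefficients
  have hgd : DifferentiableOn ℂ g (closedBall (0:ℂ) s) :=
    hg.differentiableOn.mono (closedBall_subset_ball hsR)
  obtain ⟨B, hB⟩ := (isCompact_closedBall (0:ℂ) s).exists_bound_of_continuousOn hgd.continuousOn
  have hB0 : 0 ≤ B := le_trans (norm_nonneg _) (hB 0 (mem_closedBall_self hs0.le))
  have hgB : ∀ k, ‖coeff g k‖ ≤ B / s ^ k := fun k => coeff_bound hs0 hgd hB k
  -- bound for coefficients of analytic functions on unit ball
  have hcb : closedBall (0:ℂ) ρ ⊆ ball (0:ℂ) 1 := closedBall_subset_ball hρ1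
  have hfA : ∀ f : ℂ → ℂ, AnalyticOnNhd ℂ f (ball (0:ℂ) 1) →
      ∃ A : ℝ, 0 ≤ A ∧ ∀ k, ‖coeff f k‖ ≤ A / ρ ^ k := by
    intro f hf
    have hd : DifferentiableOn ℂ f (closedBall (0:ℂ) ρ) := hf.differentiableOn.mono hcb
    obtain ⟨A, hA⟩ := (isCompact_closedBall (0:ℂ) ρ).exists_bound_of_continuousOn hd.continuousOn
    exact ⟨A, le_trans (norm_nonneg _) (hA 0 (mem_closedBall_self hρ0.le)),
      fun k => coeff_bound hρ0 hd hA k⟩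
  -- key termwise bound
  have hterm : ∀ (A₁ : ℝ) (k : ℕ), A₁ / ρ ^ k * (B / s ^ k) * T ^ k = A₁ * B * q ^ k := by
    intro A₁ k
    have hρk : (0:ℝ) < ρ ^ k := pow_pos hρ0 k
    have hsk : (0:ℝ) < s ^ k := pow_pos hs0 k
    have h1 : (q:ℝ) ^ k = T ^ k / (ρ ^ k * s ^ k) := by
      rw [hq, div_pow T (ρ * s) k, mul_pow ρ s k]
    rw [h1]
    field_simp
  have htermbd : ∀ (f : ℂ → ℂ) (A₁ : ℝ), (∀ k, ‖coeff f k‖ ≤ A₁ / ρ ^ k) →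
      ∀ (t : ℝ), t ∈ Icc (0:ℝ) T → ∀ k : ℕ,
      ‖coeff f k * coeff g k * ((t:ℂ)) ^ k‖ ≤ A₁ * B * q ^ k := by
    intro f A₁ hA₁ t ht k
    have h1 : ‖((t:ℂ)) ^ k‖ ≤ T ^ k := by
      rw [norm_pow, Complex.norm_real, Real.norm_eq_abs, abs_of_nonneg ht.1]
      exact pow_le_pow_left₀ ht.1 ht.2 k
    calc ‖coeff f k * coeff g k * ((t:ℂ)) ^ k‖
        = ‖coeff f k‖ * ‖coeff g k‖ * ‖((t:ℂ)) ^ k‖ := by rw [norm_mul, norm_mul]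
      _ ≤ (A₁ / ρ ^ k) * (B / s ^ k) * T ^ k := by
          have hc1 := hA₁ k
          have hc2 := hgB k
          have h0 : (0:ℝ) ≤ B / s ^ k := by positivity
          have h0' : (0:ℝ) ≤ A₁ / ρ ^ k := le_trans (norm_nonneg _) hc1
          apply mul_le_mul _ h1 (norm_nonneg _) (by positivity)
          exact mul_le_mul hc1 hc2 (norm_nonneg _) h0'
      _ = A₁ * B * q ^ k := hterm A₁ k
  -- summability
  have hsumm : ∀ (f : ℂ → ℂ) (A₁ : ℝ), (∀ k, ‖coeff f k‖ ≤ A₁ / ρ ^ k) →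
      ∀ (t : ℝ), t ∈ Icc (0:ℝ) T →
      Summable (fun k : ℕ => coeff f k * coeff g k * ((t:ℂ)) ^ k) := by
    intro f A₁ hA₁ t ht
    apply Summable.of_norm_bounded (g := fun k : ℕ => A₁ * B * q ^ k) (hCsum.mul_left _)
    exact htermbd f A₁ hA₁ t ht
  -- continuity in t
  have hcontΦ : ∀ (f : ℂ → ℂ) (A₁ : ℝ), (∀ k, ‖coeff f k‖ ≤ A₁ / ρ ^ k) →
      ContinuousOn (fun t : ℝ => hadamard f g ((t:ℂ))) (Icc (0:ℝ) T) := by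
    intro f A₁ hA₁
    have h1 : ContinuousOn (fun t : ℝ => ∑' k : ℕ, coeff f k * coeff g k * ((t:ℂ)) ^ k)
        (Icc (0:ℝ) T) := by
      apply continuousOn_tsum (u := fun k : ℕ => A₁ * B * q ^ k)
      · intro k
        exact (continuous_const.mul ((Complex.continuous_ofReal).pow k)).continuousOn
      · exact hCsum.mul_left _
      · intro k t ht
        exact htermbd f A₁ hA₁ t ht k
    exact h1
  -- difference bound
  have hdiff : ∀ f₁ f₂ : ℂ → ℂ, AnalyticOnNhd ℂ f₁ (ball (0:ℂ) 1) →
      AnalyticOnNhd ℂ f₂ (ball (0:ℂ) 1) → ∀ η : ℝ, 0 ≤ η →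
      (∀ z ∈ closedBall (0:ℂ) ρ, ‖f₁ z - f₂ z‖ ≤ η) → ∀ t : ℝ, t ∈ Icc (0:ℝ) T →
      ‖hadamard f₁ g ((t:ℂ)) - hadamard f₂ g ((t:ℂ))‖ ≤ η * B * C := by
    intro f₁ f₂ h1 h2 η hη hclose t ht
    obtain ⟨A₁, hA₁0, hA₁⟩ := hfA f₁ h1
    obtain ⟨A₂, hA₂0, hA₂⟩ := hfA f₂ h2
    have hsm1 := hsumm f₁ A₁ hA₁ t ht
    have hsm2 := hsumm f₂ A₂ hA₂ t ht
    have hdsub : ∀ k, ‖coeff (fun z => f₁ z - f₂ z) k‖ ≤ η / ρ ^ k := by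
      intro k
      exact coeff_bound hρ0
        ((h1.differentiableOn.mono hcb).sub (h2.differentiableOn.mono hcb))
        (fun z hz => hclose z hz) k
    have hbd : ∀ k : ℕ, ‖(coeff f₁ k - coeff f₂ k) * coeff g k * ((t:ℂ)) ^ k‖ ≤ η * B * q ^ k := by
      intro k
      have h3 := htermbd (fun z => f₁ z - f₂ z) η hdsub t ht k
      rwa [coeff_sub h1 h2] at h3
    have hns : Summable (fun k : ℕ => ‖(coeff f₁ k - coeff f₂ k) * coeff g k * ((t:ℂ)) ^ k‖) :=
      Summable.of_nonneg_of_le (fun k => norm_nonneg _) hbd (hCsum.mul_left _)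
    have heq : hadamard f₁ g ((t:ℂ)) - hadamard f₂ g ((t:ℂ)) =
        ∑' k : ℕ, (coeff f₁ k - coeff f₂ k) * coeff g k * ((t:ℂ)) ^ k := by
      rw [show hadamard f₁ g ((t:ℂ)) = ∑' k : ℕ, coeff f₁ k * coeff g k * ((t:ℂ)) ^ k from rfl,
        show hadamard f₂ g ((t:ℂ)) = ∑' k : ℕ, coeff f₂ k * coeff g k * ((t:ℂ)) ^ k from rfl,
        ← Summable.tsum_sub hsm1 hsm2]
      congr 1
      funext k
      ring
    rw [heq]
    calc ‖∑' k : ℕ, (coeff f₁ k - coeff f₂ k) * coeff g k * ((t:ℂ)) ^ k‖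
        ≤ ∑' k : ℕ, ‖(coeff f₁ k - coeff f₂ k) * coeff g k * ((t:ℂ)) ^ k‖ :=
          norm_tsum_le_tsum_norm hns
      _ ≤ ∑' k : ℕ, η * B * q ^ k := Summable.tsum_le_tsum hbd hns (hCsum.mul_left _)
      _ = η * B * C := by rw [tsum_mul_left, ← hC]
  -- per-point epsilon/eta
  have key : ∀ f, f ∈ V → ∃ εf : ℝ, ∃ ηf : ℝ, 0 < εf ∧ εf ≤ T - 1 ∧ 0 < ηf ∧
      ∀ f' ∈ V, (∀ z ∈ closedBall (0:ℂ) ρ, ‖f' z - f z‖ ≤ ηf) →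
      ∀ t : ℝ, t ∈ Icc (1:ℝ) (1 + εf) → hadamard f' g ((t:ℂ)) ≠ 0 := by
    intro f hf
    have hfa := (hV hf).1
    obtain ⟨A₁, hA₁0, hA₁⟩ := hfA f hfa
    have hΦ1 : ContinuousAt (fun t : ℝ => hadamard f g ((t:ℂ))) 1 :=
      (hcontΦ f A₁ hA₁).continuousAt (Icc_mem_nhds (by norm_num) hT1)
    have hδ0 : (0:ℝ) < ‖hadamard f g 1‖ := norm_pos_iff.mpr (hgV f hf)
    set δ : ℝ := ‖hadamard f g 1‖ with hδ
    obtain ⟨d, hd0, hdprop⟩ := Metric.continuousAt_iff.mp hΦ1 (δ/4) (by linarith)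
    have hBC1 : (0:ℝ) < B * C + 1 := by positivity
    refine ⟨min (d/2) (T-1), δ/(4*(B*C+1)), lt_min (by linarith) (by linarith),
      min_le_right _ _, by positivity, ?_⟩
    intro f' hf' hclose t ht
    have hfa' := (hV hf').1
    have htm := ht.2
    have htmin : min (d/2) (T-1) ≤ T - 1 := min_le_right _ _
    have htmin2 : min (d/2) (T-1) ≤ d/2 := min_le_left _ _
    have ht0T : t ∈ Icc (0:ℝ) T := ⟨by linarith [ht.1], by linarith⟩
    have hd1 : dist t 1 < d := by
      rw [Real.dist_eq, abs_of_nonneg (by linarith [ht.1] : (0:ℝ) ≤ t - 1)]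
      linarith
    have h5 := hdprop hd1
    rw [dist_eq_norm] at h5
    have h6 := hdiff f' f hfa' hfa (δ/(4*(B*C+1))) (by positivity) hclose t ht0T
    have h7 : δ/(4*(B*C+1)) * B * C ≤ δ/4 := by
      rw [div_mul_eq_mul_div, div_mul_eq_mul_div, div_le_div_iff₀ (by positivity) (by norm_num)]
      nlinarith [mul_nonneg hB0 hC0]
    have hone : ((1:ℝ):ℂ) = (1:ℂ) := Complex.ofReal_one
    rw [hone] at h5
    have tri1 : δ - ‖hadamard f g ((t:ℂ)) - hadamard f g 1‖ ≤ ‖hadamard f g ((t:ℂ))‖ := by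
      have habs := abs_norm_sub_norm_le (hadamard f g ((t:ℂ))) (hadamard f g 1)
      have habs' := abs_le.mp habs
      have h9 : ‖hadamard f g 1‖ = δ := rfl
      linarith [habs'.1]
    intro h0
    rw [h0, zero_sub, norm_neg] at h6
    linarith
  choose! εF ηF hεpos hεle hηpos hkey using key
  -- compactness cover
  have hSmem : closedBall (0:ℂ) ρ ∈ S 1 := ⟨hcb, isCompact_closedBall _ _⟩
  set 𝒰 : (ℂ →ᵤ[S 1] ℂ) → Set (ℂ →ᵤ[S 1] ℂ) := fun φ =>
    {ψ | ∀ z ∈ closedBall (0:ℂ) ρ, dist (UniformOnFun.toFun (S 1) ψ z)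
      (UniformOnFun.toFun (S 1) φ z) < ηF (UniformOnFun.toFun (S 1) φ)} with h𝒰
  have hU : ∀ φ ∈ (UniformOnFun.ofFun (S 1)) '' V, 𝒰 φ ∈ nhds φ := by
    rintro φ ⟨f, hf, rfl⟩
    have hη := hηpos f hf
    have hVmem : {p : ℂ × ℂ | dist p.2 p.1 < ηF f} ∈ uniformity ℂ := by
      have h1 : {p : ℂ × ℂ | dist p.2 p.1 < ηF f} = {p : ℂ × ℂ | dist p.1 p.2 < ηF f} := by
        ext p; simp [dist_comm]
      rw [h1]
      exact dist_mem_uniformity hη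
    have h2 := UniformOnFun.gen_mem_nhds (α := ℂ) (β := ℂ) (𝔖 := S 1)
      (UniformOnFun.ofFun (S 1) f) hSmem hVmem
    refine Filter.mem_of_superset h2 ?_
    intro ψ hψ
    intro z hz
    have := hψ z hz
    simpa using this
  obtain ⟨tF, htV, hcov⟩ := hc.elim_nhds_subcover 𝒰 hU
  set Fs : Finset ℝ := insert (T-1) (tF.image fun φ => εF (UniformOnFun.toFun (S 1) φ)) with hFs
  have hne : Fs.Nonempty := ⟨T-1, Finset.mem_insert_self _ _⟩
  set ε : ℝ := Fs.min' hne with hεdef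
  have htoV : ∀ φ ∈ tF, UniformOnFun.toFun (S 1) φ ∈ V := by
    intro φ hφ
    obtain ⟨f, hfV, hfφ⟩ := htV φ hφ
    rw [← hfφ]
    simpa using hfV
  have hεT : ε ≤ T - 1 := Finset.min'_le _ _ (Finset.mem_insert_self _ _)
  have hεle2 : ∀ φ ∈ tF, ε ≤ εF (UniformOnFun.toFun (S 1) φ) := fun φ hφ =>
    Finset.min'_le _ _ (Finset.mem_insert_of_mem (Finset.mem_image_of_mem _ hφ))
  have hε0 : 0 < ε := by
    have hmem := Finset.min'_mem Fs hne
    rcases Finset.mem_insert.mp hmem with h | h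
    · rw [hεdef, h]; linarith
    · obtain ⟨φ, hφ, heq⟩ := Finset.mem_image.mp h
      rw [hεdef, ← heq]
      exact hεpos _ (htoV φ hφ)
  refine ⟨ε, hε0, by linarith, ?_⟩
  intro f hf
  have hfcov : (UniformOnFun.ofFun (S 1)) f ∈ ⋃ φ ∈ tF, 𝒰 φ :=
    hcov (mem_image_of_mem _ hf)
  obtain ⟨φ, hφt, hmem⟩ := mem_iUnion₂.mp hfcov
  have hf₀V : UniformOnFun.toFun (S 1) φ ∈ V := htoV φ hφt
  have hclose : ∀ z ∈ closedBall (0:ℂ) ρ,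
      ‖f z - UniformOnFun.toFun (S 1) φ z‖ ≤ ηF (UniformOnFun.toFun (S 1) φ) := by
    intro z hz
    have := hmem z hz
    rw [← dist_eq_norm]
    simp only [UniformOnFun.toFun_ofFun] at this
    exact le_of_lt this
  exact hkey (UniformOnFun.toFun (S 1) φ) hf₀V f hf hclose (1+ε)
    ⟨by linarith, by linarith [hεle2 φ hφt]⟩

theorem stmt17 (V : Set (ℂ → ℂ)) (hV : V ⊆ A0)
    (hc : IsCompact ((UniformOnFun.ofFun (S 1)) '' V))
    (hcomplete : ∀ g ∈ VT V, ∀ x : ℂ, ‖x‖ ≤ 1 → Pt x g ∈ VT V) :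
    VT V = ⋃ r ∈ Ioo (0:ℝ) 1, Pt (r:ℂ) '' (VT V) ∧
    VT V = ⋃ r ∈ Ioo (0:ℝ) 1, Pt (r:ℂ) '' (VT (Pt (r:ℂ) '' V)) := by
  have hPt0 : ∀ (x : ℂ) (h : ℂ → ℂ), h 0 = 1 → Pt x h 0 = 1 := by
    intro x h hh
    simp [Pt, hh]
  constructor
  · ext g
    constructor
    · intro hgVT
      obtain ⟨⟨R, hR, hga⟩, hg0, hgV⟩ := hgVT
      obtain ⟨ε, hε0, hεR, hεne⟩ := main_eps V hV hc hR hga hgV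
      have h1ε : (0:ℝ) < 1 + ε := by linarith
      set r : ℝ := (1+ε)⁻¹ with hr
      have hr0 : 0 < r := inv_pos.mpr h1ε
      have hr1 : r < 1 := by rw [hr]; exact inv_lt_one_of_one_lt₀ (by linarith)
      have hmul : ((1+ε:ℝ):ℂ) * ((r:ℝ):ℂ) = 1 := by
        rw [← Complex.ofReal_mul, hr, mul_inv_cancel₀ (ne_of_gt h1ε), Complex.ofReal_one]
      refine mem_iUnion₂.mpr ⟨r, ⟨hr0, hr1⟩, ⟨Pt ((1+ε:ℝ):ℂ) g, ?_, ?_⟩⟩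
      · refine ⟨eligible_Pt hR hga ?_, hPt0 _ _ hg0, ?_⟩
        · rw [Complex.norm_real, Real.norm_eq_abs, abs_of_pos h1ε]
          exact hεR
        · intro f hf
          have heq : hadamard f (Pt ((1+ε:ℝ):ℂ) g) 1 = hadamard f g ((1+ε:ℝ):ℂ) := by
            apply tsum_congr
            intro k
            rw [coeff_Pt (lt_trans one_pos hR) hga _ k]
            ring
          rw [heq]
          exact hεne f hf
      · funext z
        simp only [Pt]
        rw [← mul_assoc, hmul, one_mul]
    · intro hg
      obtain ⟨r, hr, h, hh, heq⟩ := mem_iUnion₂.mp hg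
      rw [← heq]
      refine hcomplete h hh ((r:ℝ):ℂ) ?_
      rw [Complex.norm_real, Real.norm_eq_abs, abs_of_pos hr.1]
      exact le_of_lt hr.2
  · ext g
    constructor
    · intro hgVT
      obtain ⟨⟨R, hR, hga⟩, hg0, hgV⟩ := hgVT
      set c : ℝ := (1+R)/2 with hcdef
      have hc1 : 1 < c := by rw [hcdef]; linarith
      have hcR : c < R := by rw [hcdef]; linarith
      have hc0 : 0 < c := by linarith
      set r : ℝ := c⁻¹ with hrdef
      have hr0 : 0 < r := inv_pos.mpr hc0
      have hr1 : r < 1 := by rw [hrdef]; exact inv_lt_one_of_one_lt₀ hc1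
      have hmul : ((c:ℝ):ℂ) * ((r:ℝ):ℂ) = 1 := by
        rw [← Complex.ofReal_mul, hrdef, mul_inv_cancel₀ (ne_of_gt hc0), Complex.ofReal_one]
      refine mem_iUnion₂.mpr ⟨r, ⟨hr0, hr1⟩, ⟨Pt ((c:ℝ):ℂ) g, ?_, ?_⟩⟩
      · refine ⟨eligible_Pt hR hga ?_, hPt0 _ _ hg0, ?_⟩
        · rw [Complex.norm_real, Real.norm_eq_abs, abs_of_pos hc0]
          exact hcR
        · rintro F ⟨f, hf, rfl⟩
          have hfa := (hV hf).1
          have heq : hadamard (Pt ((r:ℝ):ℂ) f) (Pt ((c:ℝ):ℂ) g) 1 = hadamard f g 1 := by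
            apply tsum_congr
            intro k
            rw [coeff_Pt one_pos hfa _ k, coeff_Pt (lt_trans one_pos hR) hga _ k]
            have hp : ((r:ℝ):ℂ) ^ k * ((c:ℝ):ℂ) ^ k = 1 := by
              rw [← mul_pow, mul_comm, hmul, one_pow]
            calc ((r:ℝ):ℂ) ^ k * coeff f k * (((c:ℝ):ℂ) ^ k * coeff g k) * 1 ^ k
                = (((r:ℝ):ℂ) ^ k * ((c:ℝ):ℂ) ^ k) * (coeff f k * coeff g k * 1 ^ k) := by ring
              _ = coeff f k * coeff g k * 1 ^ k := by rw [hp, one_mul]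
          rw [heq]
          exact hgV f hf
      · funext z
        simp only [Pt]
        rw [← mul_assoc, hmul, one_mul]
    · intro hg
      obtain ⟨r, hr, h, hh, heq⟩ := mem_iUnion₂.mp hg
      obtain ⟨⟨R, hR, hha⟩, hh0, hhV⟩ := hh
      rw [← heq]
      refine ⟨eligible_Pt hR hha ?_, hPt0 _ _ hh0, ?_⟩
      · rw [Complex.norm_real, Real.norm_eq_abs, abs_of_pos hr.1]
        linarith [hr.2]
      · intro f hf
        have hfa := (hV hf).1
        have heq2 : hadamard f (Pt ((r:ℝ):ℂ) h) 1 = hadamard (Pt ((r:ℝ):ℂ) f) h 1 := by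
          apply tsum_congr
          intro k
          rw [coeff_Pt one_pos hfa _ k, coeff_Pt (lt_trans one_pos hR) hha _ k]
          ring
        rw [heq2]
        exact hhV (Pt ((r:ℝ):ℂ) f) ⟨f, hf, rfl⟩
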